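/- arXiv:2211.04158 — 3 statements merged into one kernel-verified Lean document; each statement's English description precedes it below -/
import Mathlib

section
/- Let $\tilde h : [\mu_{\min}, \mu_{\max}] \to (0, \infty)$ be twice continuously differentiable, convex, and satisfy $2 \tilde h'(\mu)^2 \le \tilde h(\mu) \tilde h''(\mu)$ for all $\mu \in [\mu_{\min}, \mu_{\max}]$. Then for any fixed $L > 0$, the function $\mu \mapsto (1 + L \tilde h(\mu))^{-1}$ is concave on $[\mu_{\min}, \mu_{\max}]$. -/
/-- Key step of Lemma 9: under convexity of `h̃` and `2 h̃'² ≤ h̃ h̃''`, the map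
`μ ↦ (1 + L h̃(μ))⁻¹` is concave. -/
theorem stmt_3 (μmin μmax L : ℝ) (hμμ : μmin ≤ μmax) (hL : 0 < L)
    (h h' h'' : ℝ → ℝ)
    (hpos : ∀ μ ∈ Set.Icc μmin μmax, 0 < h μ)
    (hderiv : ∀ μ ∈ Set.Icc μmin μmax, HasDerivAt h (h' μ) μ)
    (hderiv2 : ∀ μ ∈ Set.Icc μmin μmax, HasDerivAt h' (h'' μ) μ)
    (hcont2 : ContinuousOn h'' (Set.Icc μmin μmax))
    (hconv : ConvexOn ℝ (Set.Icc μmin μmax) h)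
    (hineq : ∀ μ ∈ Set.Icc μmin μmax, 2 * (h' μ) ^ 2 ≤ h μ * h'' μ) :
    ConcaveOn ℝ (Set.Icc μmin μmax) (fun μ => (1 + L * h μ)⁻¹) := by
  set D := Set.Icc μmin μmax with hD
  have hne : ∀ μ ∈ D, (1 + L * h μ) ≠ 0 := fun μ hμ =>
    ne_of_gt (by nlinarith [hpos μ hμ])
  have hcont : ContinuousOn (fun μ => (1 + L * h μ)⁻¹) D := by
    have : ContinuousOn h D := fun μ hμ => (hderiv μ hμ).continuousAt.continuousWithinAt
    exact ((continuousOn_const.add (continuousOn_const.mul this)).inv₀ hne)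
  have hint : interior D ⊆ D := interior_subset
  refine concaveOn_of_hasDerivWithinAt2_nonpos (convex_Icc _ _) hcont
    (f' := fun μ => -(L * h' μ) / (1 + L * h μ) ^ 2)
    (f'' := fun μ => (-(L * h'' μ) * (1 + L * h μ) ^ 2 -
      -(L * h' μ) * (2 * (1 + L * h μ) * (L * h' μ))) / ((1 + L * h μ) ^ 2) ^ 2)
    (fun x hx => ?_) (fun x hx => ?_) (fun x hx => ?_)
  · have hx' : x ∈ D := hint hx
    have h1 : HasDerivAt (fun μ => 1 + L * h μ) (L * h' x) x := by
      simpa using (((hderiv x hx').const_mul L).const_add 1)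
    exact (h1.inv (hne x hx')).hasDerivWithinAt
  · have hx' : x ∈ D := hint hx
    have h1 : HasDerivAt (fun μ => 1 + L * h μ) (L * h' x) x := by
      simpa using (((hderiv x hx').const_mul L).const_add 1)
    have hu : HasDerivAt (fun μ => -(L * h' μ)) (-(L * h'' x)) x := by
      simpa using (((hderiv2 x hx').const_mul L).fun_neg)
    have hv : HasDerivAt (fun μ => (1 + L * h μ) ^ 2)
        (2 * (1 + L * h x) * (L * h' x)) x := by
      simpa [mul_comm, mul_assoc] using (h1.fun_pow 2)
    exact (hu.div hv (pow_ne_zero 2 (hne x hx'))).hasDerivWithinAt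
  · have hx' : x ∈ D := hint hx
    have hhp := hpos x hx'
    have hq := hineq x hx'
    have hh'' : 0 ≤ h'' x := by nlinarith [sq_nonneg (h' x)]
    have hden : (0:ℝ) < ((1 + L * h x) ^ 2) ^ 2 := by positivity
    apply div_nonpos_of_nonpos_of_nonneg _ hden.le
    have hp1 : (0:ℝ) < 1 + L * h x := by nlinarith
    nlinarith [mul_nonneg (mul_pos hL hp1).le hh'',
      mul_le_mul_of_nonneg_left hq (mul_pos hL (mul_pos hL hp1)).le]
end

section
/- Let $f : (0, \infty) \to \mathbb{R}$ be concave and increasing, $c : [\mu_{\min}, \mu_{\max}] \to \mathbb{R}$ convex, $a > 0$, $L > 0$, and let $\tilde h : [\mu_{\min}, \mu_{\max}] \to (0,\infty)$ be twice continuously differentiable, convex, satisfying $2 \tilde h'(\mu)^2 \le \tilde h(\mu) \tilde h''(\mu)$ for all $\mu$. Then the function $U(\mu) = f\big((1 + L \tilde h(\mu))^{-1}\big) - a \, c(\mu)$ is concave on $[\mu_{\min}, \mu_{\max}]$. -/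
/-- Lemma 9 (utility_concavity): the limiting utility
`U(μ) = f((1 + L h̃(μ))⁻¹) - a c(μ)` is concave. -/
theorem stmt_4 (μmin μmax L a : ℝ) (hμμ : μmin ≤ μmax) (hL : 0 < L) (ha : 0 < a)
    (f : ℝ → ℝ) (hfconc : ConcaveOn ℝ (Set.Ioi 0) f) (hfmono : MonotoneOn f (Set.Ioi 0))
    (c : ℝ → ℝ) (hcconv : ConvexOn ℝ (Set.Icc μmin μmax) c)
    (h h' h'' : ℝ → ℝ)
    (hpos : ∀ μ ∈ Set.Icc μmin μmax, 0 < h μ)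
    (hderiv : ∀ μ ∈ Set.Icc μmin μmax, HasDerivAt h (h' μ) μ)
    (hderiv2 : ∀ μ ∈ Set.Icc μmin μmax, HasDerivAt h' (h'' μ) μ)
    (hcont2 : ContinuousOn h'' (Set.Icc μmin μmax))
    (hconv : ConvexOn ℝ (Set.Icc μmin μmax) h)
    (hineq : ∀ μ ∈ Set.Icc μmin μmax, 2 * (h' μ) ^ 2 ≤ h μ * h'' μ) :
    ConcaveOn ℝ (Set.Icc μmin μmax) (fun μ => f ((1 + L * h μ)⁻¹) - a * c μ) := by
  set D : Set ℝ := Set.Icc μmin μmax with hD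
  set g : ℝ → ℝ := fun μ => (1 + L * h μ)⁻¹ with hg
  have hDpos : ∀ μ ∈ D, 0 < 1 + L * h μ := by
    intro μ hμ
    have := hpos μ hμ
    nlinarith
  have hgpos : ∀ μ ∈ D, g μ ∈ Set.Ioi (0:ℝ) := by
    intro μ hμ
    exact Set.mem_Ioi.mpr (inv_pos.mpr (hDpos μ hμ))
  have hsub : interior D ⊆ D := interior_subset
  -- concavity of g
  have hgconc : ConcaveOn ℝ D g := by
    have hcontg : ContinuousOn g D := by
      have hch : ContinuousOn h D := fun μ hμ =>
        (hderiv μ hμ).continuousAt.continuousWithinAt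
      exact ((continuousOn_const.add (continuousOn_const.mul hch)).inv₀
        (fun μ hμ => (hDpos μ hμ).ne'))
    refine concaveOn_of_hasDerivWithinAt2_nonpos (convex_Icc _ _) hcontg
      (f' := fun μ => -(L * h' μ) / (1 + L * h μ) ^ 2)
      (f'' := fun μ => (-(L * h'' μ) * (1 + L * h μ) ^ 2 -
        -(L * h' μ) * (2 * (1 + L * h μ) ^ 1 * (L * h' μ))) / ((1 + L * h μ) ^ 2) ^ 2)
      ?_ ?_ ?_
    · intro x hx
      have hx' := hsub hx
      have : HasDerivAt g (-(L * h' x) / (1 + L * h x) ^ 2) x := by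
        simpa [Pi.inv_def] using (((hderiv x hx').const_mul L).const_add 1).inv (hDpos x hx').ne'
      exact this.hasDerivWithinAt
    · intro x hx
      have hx' := hsub hx
      have hu : HasDerivAt (fun μ => -(L * h' μ)) (-(L * h'' x)) x :=
        ((hderiv2 x hx').const_mul L).neg
      have hv : HasDerivAt (fun μ => (1 + L * h μ) ^ 2)
          (2 * (1 + L * h x) ^ 1 * (L * h' x)) x := by
        simpa [Pi.pow_def] using (((hderiv x hx').const_mul L).const_add 1).pow 2
      have := hu.div hv (pow_ne_zero 2 (hDpos x hx').ne')
      exact this.hasDerivWithinAt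
    · intro x hx
      have hx' := hsub hx
      have hDp := hDpos x hx'
      have hhp := hpos x hx'
      have hkey := hineq x hx'
      have hh2 : 0 ≤ h'' x := by nlinarith [sq_nonneg (h' x)]
      apply div_nonpos_of_nonpos_of_nonneg
      · nlinarith [mul_le_mul_of_nonneg_right hkey (mul_nonneg (mul_nonneg hL.le hL.le) hDp.le),
          mul_nonneg (mul_nonneg hL.le hh2) hDp.le]
      · positivity
  -- concavity of f ∘ g
  have hfg : ConcaveOn ℝ D (fun μ => f (g μ)) := by
    refine ⟨convex_Icc _ _, ?_⟩
    intro x hx y hy p q hp hq hpq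
    have hxy : p • x + q • y ∈ D := (convex_Icc _ _) hx hy hp hq hpq
    have h1 : p • g x + q • g y ≤ g (p • x + q • y) := hgconc.2 hx hy hp hq hpq
    have hgx := hgpos x hx
    have hgy := hgpos y hy
    have h2 : p • g x + q • g y ∈ Set.Ioi (0:ℝ) := by
      simp only [smul_eq_mul, Set.mem_Ioi] at *
      rcases eq_or_lt_of_le hp with hp0 | hp0
      · have : q = 1 := by linarith
        rw [← hp0, this]; linarith
      · nlinarith
    calc p • f (g x) + q • f (g y) ≤ f (p • g x + q • g y) :=
          hfconc.2 hgx hgy hp hq hpq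
      _ ≤ f (g (p • x + q • y)) := hfmono h2 (hgpos _ hxy) h1
  have hac : ConvexOn ℝ D (fun μ => a * c μ) := by
    simpa [smul_eq_mul] using hcconv.smul ha.le
  exact hfg.sub hac
end

section
/- Let $\lambda_n > 0$ with $\lambda_n \to \infty$, $\alpha \in (1/2, 1]$, $\beta > 0$, $\bar\mu > 0$, and $K > 0$. Define $r_n = \left(\frac{\lambda_n}{\lambda_n + \frac{\beta}{4} \lambda_n^{\alpha} \bar\mu^{1-\alpha}}\right)^{K n^{\alpha}} \cdot \frac{\left(\lambda_n + \frac{\beta}{4}\lambda_n^{\alpha}\bar\mu^{1-\alpha}\right) n^{\alpha}}{\frac{\beta}{4} \lambda_n^{\alpha} \bar\mu^{1-\alpha}}$, where additionally $\lambda_n / n \to \bar\lambda \in (0, \infty)$. Then $r_n \to 0$ as $n \to \infty$. -/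
open Real Filter

set_option maxHeartbeats 1600000 in
/-- Estimate from the proof of Lemma 4 (uniform_integrable_inverse): the geometric
decay beats the polynomial growth when `α > 1/2`. -/
theorem stmt_12 (lam : ℕ → ℝ) (hlam : ∀ n, 0 < lam n)
    (hlaminf : Tendsto lam atTop atTop)
    (α β μ K lamBar : ℝ) (hα : α ∈ Set.Ioc (1/2 : ℝ) 1) (hβ : 0 < β) (hμ : 0 < μ)
    (hK : 0 < K) (hlamBar : 0 < lamBar)
    (hscale : Tendsto (fun n : ℕ => lam n / n) atTop (nhds lamBar))
    (r : ℕ → ℝ)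
    (hr : ∀ n : ℕ, r n =
      (lam n / (lam n + β / 4 * (lam n) ^ α * μ ^ (1 - α))) ^ (K * (n : ℝ) ^ α)
        * ((lam n + β / 4 * (lam n) ^ α * μ ^ (1 - α)) * (n : ℝ) ^ α
            / (β / 4 * (lam n) ^ α * μ ^ (1 - α)))) :
    Tendsto r atTop (nhds 0) := by
  obtain ⟨hα1, hα2⟩ := hα
  have hμα : 0 < μ ^ (1 - α) := Real.rpow_pos_of_pos hμ _
  set s : ℝ := 2 * α - 1 with hs_def
  have hs : 0 < s := by simp only [hs_def]; linarith
  set C : ℝ := β / 4 * μ ^ (1 - α) with hC_def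
  have hC : 0 < C := by positivity
  set L : ℝ := lamBar ^ (α - 1) with hL_def
  have hL : 0 < L := Real.rpow_pos_of_pos hlamBar _
  set m : ℝ := C * (L / 2) with hm_def
  have hm : 0 < m := by positivity
  set M : ℝ := C * (2 * L) with hM_def
  have hM : 0 < M := by positivity
  set c : ℝ := K * m / (1 + M) with hc_def
  have hc : 0 < c := by positivity
  set a : ℕ → ℝ := fun n => C * (lam n) ^ (α - 1) with ha_def
  have ha_pos : ∀ n, 0 < a n := fun n =>
    mul_pos hC (Real.rpow_pos_of_pos (hlam n) _)
  -- positivity of r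
  have hr_nonneg : ∀ n, 0 ≤ r n := by
    intro n
    have hb : 0 < β / 4 * (lam n) ^ α * μ ^ (1 - α) :=
      mul_pos (mul_pos (by linarith) (Real.rpow_pos_of_pos (hlam n) _)) hμα
    have hd : 0 < lam n + β / 4 * (lam n) ^ α * μ ^ (1 - α) := by
      have := hlam n; linarith
    rw [hr n]
    apply mul_nonneg
    · exact Real.rpow_nonneg (div_nonneg (hlam n).le hd.le) _
    · exact div_nonneg (mul_nonneg hd.le (Real.rpow_nonneg (n.cast_nonneg) _)) hb.le
  -- limit of (lam n / n) ^ (α - 1)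
  have hq : Tendsto (fun n : ℕ => (lam n / n) ^ (α - 1)) atTop (nhds L) := by
    have hcont : ContinuousAt (fun x : ℝ => x ^ (α - 1)) lamBar :=
      Real.continuousAt_rpow_const _ _ (Or.inl hlamBar.ne')
    exact hcont.tendsto.comp hscale
  have E1 : ∀ᶠ n : ℕ in atTop, L / 2 < (lam n / n) ^ (α - 1) :=
    hq.eventually_const_lt (by linarith)
  have E2 : ∀ᶠ n : ℕ in atTop, (lam n / n) ^ (α - 1) < 2 * L :=
    hq.eventually_lt_const (by linarith)
  have E3 : ∀ᶠ n : ℕ in atTop, 1 ≤ n := eventually_ge_atTop 1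
  -- the main eventual bound
  have main : ∀ᶠ n : ℕ in atTop,
      r n ≤ (1 + M) / m * ((n : ℝ) * Real.exp (-c * (n : ℝ) ^ s)) := by
    filter_upwards [E1, E2, E3] with n hq1 hq2 hn1
    have hn0 : (0 : ℝ) < n := by exact_mod_cast Nat.lt_of_lt_of_le Nat.zero_lt_one hn1
    have hn1' : (1 : ℝ) ≤ n := by exact_mod_cast hn1
    have hlamn := hlam n
    -- split lam n ^ (α-1)
    have hsplitq : (lam n) ^ (α - 1) = (lam n / n) ^ (α - 1) * (n : ℝ) ^ (α - 1) := by
      rw [Real.div_rpow hlamn.le hn0.le]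
      field_simp
    have hnpow : 0 < (n : ℝ) ^ (α - 1) := Real.rpow_pos_of_pos hn0 _
    have hnpow1 : (n : ℝ) ^ (α - 1) ≤ 1 :=
      Real.rpow_le_one_of_one_le_of_nonpos hn1' (by linarith)
    have ham : m * (n : ℝ) ^ (α - 1) ≤ a n := by
      simp only [ha_def, hsplitq, hm_def]
      have h := mul_le_mul_of_nonneg_right hq1.le hnpow.le
      nlinarith [mul_le_mul_of_nonneg_left h hC.le]
    have haM : a n ≤ M := by
      simp only [ha_def, hsplitq, hM_def]
      have h1 : (lam n / n) ^ (α - 1) * (n : ℝ) ^ (α - 1) ≤ 2 * L := by nlinarith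
      nlinarith [mul_le_mul_of_nonneg_left h1 hC.le]
    have h1a : 0 < 1 + a n := by have := ha_pos n; linarith
    -- rewrite r n
    have hsplit : (lam n) ^ α = lam n * (lam n) ^ (α - 1) := by
      have h := Real.rpow_add hlamn 1 (α - 1)
      rw [Real.rpow_one] at h
      rw [show (1 : ℝ) + (α - 1) = α from by ring] at h
      exact h
    have hcn : lam n + β / 4 * (lam n) ^ α * μ ^ (1 - α) = lam n * (1 + a n) := by
      simp only [ha_def, hC_def, hsplit]; ring
    have hcn2 : β / 4 * (lam n) ^ α * μ ^ (1 - α) = lam n * a n := by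
      simp only [ha_def, hC_def, hsplit]; ring
    have hrn : r n = ((1 + a n)⁻¹) ^ (K * (n : ℝ) ^ α)
        * ((1 + a n) * (n : ℝ) ^ α / a n) := by
      rw [hr n, hcn, hcn2]
      congr 1
      · congr 1
        field_simp
      · have h0 := (ha_pos n).ne'
        field_simp
    -- log lower bound
    have hlog : a n / (1 + M) ≤ Real.log (1 + a n) := by
      have h₁ : Real.log ((1 + a n)⁻¹) ≤ (1 + a n)⁻¹ - 1 :=
        Real.log_le_sub_one_of_pos (by positivity)
      rw [Real.log_inv] at h₁
      have h₂ : a n / (1 + a n) = 1 - (1 + a n)⁻¹ := by field_simp; ring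
      have h₃ : a n / (1 + M) ≤ a n / (1 + a n) := by
        gcongr
        all_goals nlinarith [ha_pos n, haM]
      linarith
    have ht : 0 ≤ K * (n : ℝ) ^ α := by positivity
    have hpow : (n : ℝ) ^ (α - 1) * (n : ℝ) ^ α = (n : ℝ) ^ s := by
      rw [← Real.rpow_add hn0, show α - 1 + α = s from by rw [hs_def]; ring]
    -- first factor bound
    have hfac1 : ((1 + a n)⁻¹) ^ (K * (n : ℝ) ^ α) ≤ Real.exp (-c * (n : ℝ) ^ s) := by
      rw [Real.rpow_def_of_pos (by positivity : (0:ℝ) < (1 + a n)⁻¹), Real.log_inv]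
      apply Real.exp_le_exp.mpr
      have hkey : m * (n : ℝ) ^ (α - 1) / (1 + M) * (K * (n : ℝ) ^ α)
          ≤ Real.log (1 + a n) * (K * (n : ℝ) ^ α) := by
        apply mul_le_mul_of_nonneg_right _ ht
        calc m * (n : ℝ) ^ (α - 1) / (1 + M) ≤ a n / (1 + M) := by gcongr
          _ ≤ Real.log (1 + a n) := hlog
      have hcs : c * (n : ℝ) ^ s = m * (n : ℝ) ^ (α - 1) / (1 + M) * (K * (n : ℝ) ^ α) := by
        rw [← hpow]; simp only [hc_def]; ring
      linarith
    -- second factor bound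
    have hfac1' : 0 ≤ ((1 + a n)⁻¹) ^ (K * (n : ℝ) ^ α) :=
      Real.rpow_nonneg (inv_nonneg.2 h1a.le) _
    have hnα : 0 ≤ (n : ℝ) ^ α := Real.rpow_nonneg hn0.le _
    have hfac2 : (1 + a n) * (n : ℝ) ^ α / a n
        ≤ (1 + M) * (n : ℝ) ^ α / (m * (n : ℝ) ^ (α - 1)) := by
      exact div_le_div₀ (mul_nonneg (by linarith) hnα)
        (mul_le_mul_of_nonneg_right (by linarith) hnα) (mul_pos hm hnpow) ham
    have hfrac : (1 + M) * (n : ℝ) ^ α / (m * (n : ℝ) ^ (α - 1))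
        = (1 + M) / m * (n : ℝ) := by
      rw [show (1 + M) * (n : ℝ) ^ α / (m * (n : ℝ) ^ (α - 1))
          = (1 + M) / m * ((n : ℝ) ^ α / (n : ℝ) ^ (α - 1)) from by ring,
        ← Real.rpow_sub hn0, show α - (α - 1) = (1 : ℝ) from by ring, Real.rpow_one]
    calc r n ≤ Real.exp (-c * (n : ℝ) ^ s) * ((1 + M) / m * (n : ℝ)) := by
          rw [hrn, ← hfrac]
          exact mul_le_mul hfac1 hfac2 (by positivity) (Real.exp_nonneg _)
      _ = (1 + M) / m * ((n : ℝ) * Real.exp (-c * (n : ℝ) ^ s)) := by ring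
  -- the bound tends to 0
  have hbound : Tendsto (fun n : ℕ => (1 + M) / m * ((n : ℝ) * Real.exp (-c * (n : ℝ) ^ s)))
      atTop (nhds 0) := by
    have h0 : Tendsto (fun x : ℝ => x ^ (1 / s) * Real.exp (-c * x)) atTop (nhds 0) :=
      tendsto_rpow_mul_exp_neg_mul_atTop_nhds_zero _ _ hc
    have h1 : Tendsto (fun n : ℕ => (n : ℝ) ^ s) atTop atTop :=
      (tendsto_rpow_atTop hs).comp tendsto_natCast_atTop_atTop
    have h2 := h0.comp h1
    have h3 : Tendsto (fun n : ℕ => (n : ℝ) * Real.exp (-c * (n : ℝ) ^ s))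
        atTop (nhds 0) := by
      apply h2.congr'
      filter_upwards [eventually_ge_atTop 1] with n hn1
      have hn0 : (0 : ℝ) ≤ n := n.cast_nonneg
      simp only [Function.comp_apply]
      have hnn : (1:ℝ) ≤ (n:ℝ) := by exact_mod_cast hn1
      have hid : ((n : ℝ) ^ s) ^ (1 / s) = (n : ℝ) := by
        rw [← Real.rpow_mul hn0, mul_one_div, div_self hs.ne', Real.rpow_one]
      rw [hid]
    have := h3.const_mul ((1 + M) / m)
    simpa using this
  exact squeeze_zero' (Eventually.of_forall hr_nonneg) main hbound
end
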